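/- Let k ≥ 3, L ∈ [0,1]^{k×d}, Σ a finite set, Φ ∈ Σ^{k×d}, and a, b ∈ [k]. Suppose there exists a function w : [k] × Σ → ℝ such that Σ_{c=1}^k w(c, Φ_{c,x}) = L_{a,x} − L_{b,x} for all x ∈ [d]. Then there exists such a function w additionally satisfying max_{c,σ} |w(c,σ)| ≤ d^{1/2} k^{d/2}. -/

import Mathlib

open Matrix Finset Real

lemma stmt13_trace_eq_sum_eigs {ι : Type*} [Fintype ι] [DecidableEq ι]
    {M : Matrix ι ι ℝ} (hM : M.IsHermitian) :
    M.trace = ∑ i, hM.eigenvalues i := by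
  rw [hM.trace_eq_sum_eigenvalues]
  simp

lemma stmt13_det_le_pow {ι : Type*} [Fintype ι] [DecidableEq ι] {M : Matrix ι ι ℝ}
    (hM : M.PosSemidef) {m : ℕ} (hm : Fintype.card ι = m) (hm1 : 1 ≤ m)
    {t : ℝ} (ht : M.trace ≤ t) :
    M.det ≤ (t / m) ^ m := by
  have hμ := hM.eigenvalues_nonneg
  have hdet : M.det = ∏ i, hM.1.eigenvalues i := by
    simpa using hM.1.det_eq_prod_eigenvalues
  have htr : M.trace = ∑ i, hM.1.eigenvalues i := stmt13_trace_eq_sum_eigs hM.1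
  set μ := hM.1.eigenvalues with hμdef
  have hm0 : (m : ℝ) ≠ 0 := Nat.cast_ne_zero.mpr (by omega)
  have hprodnn : (0:ℝ) ≤ ∏ i, μ i := Finset.prod_nonneg fun i _ => hμ i
  have h1 : ∏ i, μ i ^ ((m:ℝ)⁻¹) ≤ ∑ i, (m:ℝ)⁻¹ * μ i :=
    Real.geom_mean_le_arith_mean_weighted univ _ _ (fun i _ => by positivity)
      (by simp [Finset.sum_const, hm]; field_simp) (fun i _ => hμ i)
  have h2 : (∏ i, μ i) ^ ((m:ℝ)⁻¹) ≤ t / m := by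
    rw [← Real.finset_prod_rpow _ _ (fun i _ => hμ i)]
    refine h1.trans ?_
    rw [← Finset.mul_sum, ← htr]
    rw [inv_mul_eq_div, div_le_div_iff_of_pos_right]
    · exact ht
    · exact_mod_cast Nat.pos_of_ne_zero (by omega)
  calc M.det = ∏ i, μ i := hdet
    _ = ((∏ i, μ i) ^ ((m:ℝ)⁻¹)) ^ m := by
        rw [← Real.rpow_natCast ((∏ i, μ i) ^ ((m:ℝ)⁻¹)) m, ← Real.rpow_mul hprodnn,
          inv_mul_cancel₀ hm0, Real.rpow_one]
    _ ≤ (t / m) ^ m := pow_le_pow_left₀ (Real.rpow_nonneg hprodnn _) h2 m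

set_option maxHeartbeats 1600000 in
lemma stmt13_core {k d : ℕ} (hk : 3 ≤ k) {ι : Type*} [Fintype ι] [DecidableEq ι]
    (g : ι → Fin d → ℝ)
    (h01 : ∀ i x, g i x = 0 ∨ g i x = 1)
    (hrow : ∀ x, ∑ i, g i x ≤ (k : ℝ))
    (hcard : Fintype.card ι ≤ d)
    (hinj : ∀ r : ι → ℝ, (∀ x, ∑ i, g i x * r i = 0) → r = 0)
    (v : Fin d → ℝ) (hv : ∀ x, |v x| ≤ 1)
    (r : ι → ℝ) (hr : ∀ x, ∑ i, g i x * r i = v x) (j : ι) :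
    |r j| ≤ Real.sqrt d * (k : ℝ) ^ ((d : ℝ) / 2) := by
  classical
  set m := Fintype.card ι with hmdef
  have hm1 : 1 ≤ m := Fintype.card_pos_iff.mpr ⟨j⟩
  set B : Matrix (Fin d) ι ℝ := Matrix.of fun x i => g i x with hBdef
  set G : Matrix ι ι ℝ := Bᵀ * B with hGdef
  have hGentry : ∀ i l, G i l = ∑ x, g i x * g l x := by
    intro i l
    simp [hGdef, Matrix.mul_apply, hBdef]
  have hGsym : ∀ i l, G i l = G l i := by
    intro i l; rw [hGentry, hGentry]
    exact Finset.sum_congr rfl fun x _ => mul_comm _ _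
  have hBmul : ∀ c : ι → ℝ, ∀ x, (B *ᵥ c) x = ∑ i, g i x * c i := by
    intro c x
    simp [Matrix.mulVec, dotProduct, hBdef]
  -- positivity of the Gram determinant
  have hGpd : G.PosDef := by
    rw [Matrix.posDef_iff_dotProduct_mulVec]
    constructor
    · ext i l
      simpa [Matrix.conjTranspose_apply] using (hGsym l i)
    · intro x hx
      have hBx : B *ᵥ x ≠ 0 := by
        intro h
        exact hx (hinj x fun xx => by
          have := congrFun h xx
          simpa [hBmul] using this)
      obtain ⟨x0, hx0⟩ := Function.ne_iff.mp hBx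
      have h1 : star x ⬝ᵥ (G *ᵥ x) = (B *ᵥ x) ⬝ᵥ (B *ᵥ x) := by
        rw [hGdef, ← Matrix.mulVec_mulVec, star_trivial,
          dotProduct_mulVec, Matrix.vecMul_transpose]
      rw [h1]
      refine Finset.sum_pos' (fun i _ => mul_self_nonneg _) ⟨x0, Finset.mem_univ _, ?_⟩
      exact mul_self_pos.mpr (by simpa using hx0)
  have hdet_pos : 0 < G.det := hGpd.det_pos
  -- integrality : det G ≥ 1
  have hdet1 : 1 ≤ G.det := by
    set gz : ι → Fin d → ℤ := fun i x => if g i x = 1 then 1 else 0 with hgzdef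
    have hgz : ∀ i x, g i x = (gz i x : ℝ) := by
      intro i x
      rcases h01 i x with h | h <;> norm_num [hgzdef, h]
    set Gz : Matrix ι ι ℤ := Matrix.of fun i l => ∑ x, gz i x * gz l x with hGzdef
    have hGmap : G = Gz.map (Int.cast : ℤ → ℝ) := by
      ext i l
      simp only [Matrix.map_apply, Matrix.of_apply, hGzdef, hGentry]
      push_cast
      exact Finset.sum_congr rfl fun x _ => by rw [hgz, hgz]
    have hdi : G.det = ((Gz.det : ℤ) : ℝ) := by
      rw [hGmap]
      exact (RingHom.map_det (Int.castRingHom ℝ) Gz).symm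
    rw [hdi]
    have : (0:ℤ) < Gz.det := by
      by_contra h
      push_neg at h
      have : ((Gz.det : ℤ):ℝ) ≤ 0 := by exact_mod_cast h
      rw [← hdi] at this
      linarith
    exact_mod_cast this
  -- Cramer's rule
  have hBr : B *ᵥ r = v := by
    ext x; rw [hBmul, hr]
  set q : ι → ℝ := Bᵀ *ᵥ v with hqdef
  have hGr : G *ᵥ r = q := by
    rw [hGdef, ← Matrix.mulVec_mulVec, hBr]
  have hCramer : G.det • r = G.adjugate *ᵥ q := by
    rw [← hGr, Matrix.mulVec_mulVec, Matrix.adjugate_mul, Matrix.smul_mulVec,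
      Matrix.one_mulVec]
  set c : ι → ℝ := fun i => G.adjugate j i with hcdef
  set u : Fin d → ℝ := B *ᵥ c with hudef
  have hu : ∀ x, u x = ∑ i, g i x * c i := fun x => hBmul c x
  have hkey : G.det * r j = ∑ x, u x * v x := by
    have h1 : G.det * r j = ∑ i, c i * q i := by
      have := congrFun hCramer j
      simpa [Matrix.mulVec, dotProduct, hcdef] using this
    rw [h1]
    have h2 : ∀ i, q i = ∑ x, g i x * v x := by
      intro i
      simp [hqdef, Matrix.mulVec, dotProduct, hBdef]
    calc ∑ i, c i * q i = ∑ i, ∑ x, g i x * c i * v x := by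
          refine Finset.sum_congr rfl fun i _ => ?_
          rw [h2, Finset.mul_sum]
          exact Finset.sum_congr rfl fun x _ => by ring
      _ = ∑ x, ∑ i, g i x * c i * v x := Finset.sum_comm
      _ = ∑ x, u x * v x := by
          refine Finset.sum_congr rfl fun x _ => ?_
          rw [hu, Finset.sum_mul]
  have hGc : ∀ i, (G *ᵥ c) i = G.det * (if j = i then 1 else 0) := by
    intro i
    calc (G *ᵥ c) i = ∑ l, G i l * c l := by
          simp [Matrix.mulVec, dotProduct]
      _ = ∑ l, G.adjugate j l * G l i := by
          refine Finset.sum_congr rfl fun l _ => ?_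
          rw [hcdef, hGsym i l]; ring
      _ = (G.adjugate * G) j i := (Matrix.mul_apply).symm
      _ = (G.det • (1 : Matrix ι ι ℝ)) j i := by rw [Matrix.adjugate_mul]
      _ = G.det * (if j = i then 1 else 0) := by simp [Matrix.one_apply]
  have huu : ∑ x, u x * u x = G.det * c j := by
    calc ∑ x, u x * u x = ∑ x, ∑ i, g i x * c i * u x := by
          refine Finset.sum_congr rfl fun x _ => ?_
          rw [hu, Finset.sum_mul]
      _ = ∑ i, ∑ x, g i x * c i * u x := Finset.sum_comm
      _ = ∑ i, c i * (G *ᵥ c) i := by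
          refine Finset.sum_congr rfl fun i _ => ?_
          have : (G *ᵥ c) i = (Bᵀ *ᵥ u) i := by
            rw [hudef, Matrix.mulVec_mulVec, hGdef]
          rw [this]
          simp only [Matrix.mulVec, dotProduct, Matrix.transpose_apply, hBdef,
            Matrix.of_apply]
          rw [Finset.mul_sum]
          exact Finset.sum_congr rfl fun x _ => by ring
      _ = G.det * c j := by
          rw [Finset.sum_congr rfl fun i _ => by rw [hGc i]]
          simp [mul_comm]
  have hcj_nonneg : 0 ≤ c j := by
    nlinarith [Finset.sum_nonneg (fun x (_ : x ∈ Finset.univ) => mul_self_nonneg (u x)), huu,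
      hdet_pos]
  -- bound on the adjugate diagonal entry
  have hadj : c j ≤ (k : ℝ) ^ d := by
    set M : Matrix ι ι ℝ :=
      Matrix.of (fun i l => if i = j ∨ l = j then (if i = l then (1:ℝ) else 0) else G i l)
      with hMdef
    have hMentry : ∀ i l, M i l = if i = j ∨ l = j then (if i = l then (1:ℝ) else 0) else G i l :=
      fun i l => rfl
    -- adjugate G j j = det M
    have hdetM : c j = M.det := by
      show G.adjugate j j = M.det
      rw [Matrix.adjugate_apply]
      set z : ι → ℝ := fun i => if i = j then 0 else G i j with hzdef
      have hupd : G.updateRow j (Pi.single j 1) = M.updateCol j (Pi.single j 1 + z) := by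
        ext i l
        rw [Matrix.updateRow_apply, Matrix.updateCol_apply]
        by_cases hl : l = j <;> by_cases hi : i = j
        · simp [hzdef, hi, hl, Pi.single_apply]
        · simp [hzdef, hi, hl, Pi.single_apply, Ne.symm hi]
        · simp [hzdef, hi, hl, hMentry, Pi.single_apply, Ne.symm hl]
        · simp [hzdef, hi, hl, hMentry, Pi.single_apply]
      rw [hupd, Matrix.det_updateCol_add]
      have h4 : M.updateCol j (Pi.single j 1) = M := by
        ext i l
        rw [Matrix.updateCol_apply]
        by_cases hl : l = j
        · rw [if_pos hl, hl, hMentry]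
          by_cases hi : i = j
          · simp [hi, Pi.single_apply]
          · simp [hi, Pi.single_apply, Ne.symm hi]
        · rw [if_neg hl]
      have h5 : (M.updateCol j z).det = 0 := by
        apply Matrix.det_eq_zero_of_row_eq_zero j
        intro l
        rw [Matrix.updateCol_apply]
        by_cases hl : l = j
        · simp [hl, hzdef]
        · simp [hl, hMentry, Ne.symm hl]
      rw [h4, h5, add_zero]
    -- M is a Gram matrix, hence PSD
    set C : Matrix (Fin d ⊕ Unit) ι ℝ :=
      Matrix.of (fun x i => Sum.rec (fun x0 => if i = j then 0 else g i x0)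
        (fun _ => if i = j then (1:ℝ) else 0) x) with hCdef
    have hMC : M = Cᴴ * C := by
      ext i l
      have hrhs : (Cᴴ * C) i l
          = (∑ x : Fin d, (if i = j then (0:ℝ) else g i x) * (if l = j then 0 else g l x))
            + (if i = j then (1:ℝ) else 0) * (if l = j then 1 else 0) := by
        simp [Matrix.mul_apply, Matrix.conjTranspose_apply, hCdef, Fintype.sum_sum_type]
      rw [hMentry, hrhs]
      by_cases hi : i = j <;> by_cases hl : l = j
      · simp [hi, hl]
      · simp [hi, hl, Ne.symm hl]
      · simp [hi, hl, Ne.symm hi]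
      · rw [if_neg (not_or.mpr ⟨hi, hl⟩)]
        simp [hi, hl, hGentry]
    have hMpsd : M.PosSemidef := hMC ▸ Matrix.posSemidef_conjTranspose_mul_self C
    -- trace bound
    have hGii : ∑ i, G i i ≤ (d : ℝ) * k := by
      have : ∀ i x, g i x * g i x = g i x := by
        intro i x; rcases h01 i x with h | h <;> rw [h] <;> ring
      calc ∑ i, G i i = ∑ i, ∑ x, g i x := by
            refine Finset.sum_congr rfl fun i _ => ?_
            rw [hGentry]
            exact Finset.sum_congr rfl fun x _ => this i x
        _ = ∑ x, ∑ i, g i x := Finset.sum_comm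
        _ ≤ ∑ _x : Fin d, (k:ℝ) := Finset.sum_le_sum fun x _ => hrow x
        _ = (d:ℝ) * k := by simp [mul_comm]
    have hGjj : 1 ≤ G j j := by
      have hgj : g j ≠ 0 := by
        intro h
        have : (Pi.single j (1:ℝ) : ι → ℝ) = 0 := by
          apply hinj
          intro x
          rw [Finset.sum_eq_single j]
          · simp [h]
          · intro i _ hij; simp [Pi.single_apply, hij]
          · intro h'; exact absurd (Finset.mem_univ j) h'
        have := congrFun this j
        simp at this
      obtain ⟨x0, hx0⟩ := Function.ne_iff.mp hgj
      have hx01 : g j x0 = 1 := by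
        rcases h01 j x0 with h | h
        · exact absurd h (by simpa using hx0)
        · exact h
      rw [hGentry]
      calc (1:ℝ) = g j x0 * g j x0 := by rw [hx01]; ring
        _ ≤ ∑ x, g j x * g j x :=
            Finset.single_le_sum (f := fun x => g j x * g j x)
              (fun x _ => mul_self_nonneg _) (Finset.mem_univ x0)
    have htrM : M.trace ≤ (d:ℝ) * k := by
      have h1 : M.trace = ∑ i, (if i = j then (1:ℝ) else G i i) := by
        rw [Matrix.trace]
        refine Finset.sum_congr rfl fun i _ => ?_
        rw [Matrix.diag_apply, hMentry]
        by_cases hi : i = j <;> simp [hi]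
      rw [h1]
      have h2 : ∑ i, (if i = j then (1:ℝ) else G i i)
          = 1 + ∑ i ∈ Finset.univ.erase j, G i i := by
        rw [← Finset.add_sum_erase _ _ (Finset.mem_univ j)]
        simp only [if_pos rfl]
        congr 1
        exact Finset.sum_congr rfl fun i hi => by
          rw [if_neg (Finset.ne_of_mem_erase hi)]
      rw [h2]
      have h3 : ∑ i ∈ Finset.univ.erase j, G i i = (∑ i, G i i) - G j j := by
        rw [← Finset.add_sum_erase _ _ (Finset.mem_univ j)]; ring
      rw [h3]
      linarith
    -- apply AM-GM determinant bound
    have hdm := stmt13_det_le_pow hMpsd rfl hm1 htrM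
    rw [hdetM]
    refine hdm.trans ?_
    -- (d k / m)^m ≤ k^d
    have hmd : m ≤ d := hcard
    have hm0 : (0:ℝ) < (m:ℝ) := by exact_mod_cast Nat.pos_of_ne_zero (by omega)
    have hk0 : (0:ℝ) ≤ (k:ℝ) := by positivity
    have hsplit : (d:ℝ) * k / m = (k:ℝ) * ((d:ℝ)/m) := by ring
    set e := d - m with hedef
    have hde : (d:ℝ) = (m:ℝ) + (e:ℝ) := by
      have : m + e = d := by omega
      exact_mod_cast (congrArg (fun n : ℕ => (n:ℝ)) this).symm
    have hdm2 : ((d:ℝ)/m) ^ m ≤ Real.exp e := by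
      have h6 : (d:ℝ)/m ≤ Real.exp ((e:ℝ)/m) := by
        have h7 : (e:ℝ)/m + 1 ≤ Real.exp ((e:ℝ)/m) := Real.add_one_le_exp _
        have h8 : (d:ℝ)/m = (e:ℝ)/m + 1 := by
          rw [hde]; field_simp; ring
        linarith
      calc ((d:ℝ)/m) ^ m ≤ (Real.exp ((e:ℝ)/m)) ^ m :=
            pow_le_pow_left₀ (by positivity) h6 m
        _ = Real.exp ((e:ℝ)/m * m) := by
            rw [← Real.exp_nat_mul]; ring_nf
        _ = Real.exp e := by
            congr 1; field_simp
    have hexpk : Real.exp (e:ℝ) ≤ (k:ℝ) ^ e := by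
      rw [← Real.exp_one_pow]
      refine pow_le_pow_left₀ (Real.exp_pos 1).le ?_ e
      have h9 : Real.exp 1 < 2.7182818286 := Real.exp_one_lt_d9
      have : (3:ℝ) ≤ (k:ℝ) := by exact_mod_cast hk
      linarith
    calc ((d:ℝ) * k / m) ^ m = (k:ℝ)^m * ((d:ℝ)/m)^m := by
          rw [hsplit, mul_pow]
      _ ≤ (k:ℝ)^m * (k:ℝ)^e := by
          refine mul_le_mul_of_nonneg_left (hdm2.trans hexpk) (by positivity)
      _ = (k:ℝ)^d := by
          rw [← pow_add]; congr 1; omega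
  -- Cauchy–Schwarz and conclusion
  have hv2 : ∑ x, v x ^ 2 ≤ (d:ℝ) := by
    calc ∑ x, v x ^ 2 ≤ ∑ _x : Fin d, (1:ℝ) := by
          refine Finset.sum_le_sum fun x _ => ?_
          have h1 := hv x
          nlinarith [abs_nonneg (v x), sq_abs (v x)]
      _ = (d:ℝ) := by simp
  have hu2 : ∑ x, u x ^ 2 = G.det * c j := by
    rw [← huu]
    exact Finset.sum_congr rfl fun x _ => sq (u x)
  have hineq : (G.det * r j)^2 ≤ G.det * ((k:ℝ)^d * d) := by
    rw [hkey]
    calc (∑ x, u x * v x)^2 ≤ (∑ x, u x ^2) * ∑ x, v x ^2 :=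
          Finset.sum_mul_sq_le_sq_mul_sq Finset.univ u v
      _ ≤ (G.det * c j) * d := by
          rw [hu2]
          have hnn : 0 ≤ G.det * c j := mul_nonneg hdet_pos.le hcj_nonneg
          exact mul_le_mul_of_nonneg_left hv2 hnn
      _ ≤ G.det * ((k:ℝ)^d * d) := by
          have h3 : G.det * c j ≤ G.det * (k:ℝ)^d :=
            mul_le_mul_of_nonneg_left hadj hdet_pos.le
          have hd0 : (0:ℝ) ≤ (d:ℝ) := by positivity
          nlinarith
  have hrj2 : (r j)^2 ≤ (d:ℝ) * (k:ℝ)^d := by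
    have h1 : G.det * (G.det * (r j)^2) ≤ G.det * ((k:ℝ)^d * (d:ℝ)) := by
      nlinarith [hineq]
    have h2 : G.det * (r j)^2 ≤ (k:ℝ)^d * d := (mul_le_mul_iff_right₀ hdet_pos).mp h1
    have h3 : (r j)^2 ≤ G.det * (r j)^2 := le_mul_of_one_le_left (sq_nonneg _) hdet1
    have h4 : (r j)^2 ≤ (k:ℝ)^d * d := h3.trans h2
    have h5 : (k:ℝ)^d * (d:ℝ) = (d:ℝ) * (k:ℝ)^d := by ring
    linarith
  have habs : |r j| ≤ Real.sqrt ((d:ℝ) * (k:ℝ)^d) := by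
    rw [← Real.sqrt_sq_eq_abs]
    exact Real.sqrt_le_sqrt hrj2
  refine habs.trans_eq ?_
  rw [Real.sqrt_mul (by positivity : (0:ℝ) ≤ (d:ℝ))]
  congr 1
  rw [Real.sqrt_eq_rpow, ← Real.rpow_natCast (k:ℝ) d, ← Real.rpow_mul (by positivity)]
  norm_num
  ring_nf

set_option maxHeartbeats 1600000 in
/-- Proposition 7: if the loss difference of actions `a` and `b` can be
globally estimated, the estimation function can be chosen with magnitude at
most `d^{1/2} k^{d/2}`. -/
theorem stmt13 (k d : ℕ) (hk : 3 ≤ k) (S : Type*) [Fintype S]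
    (L : Fin k → Fin d → ℝ) (hL : ∀ a x, L a x ∈ Set.Icc (0 : ℝ) 1)
    (Φ : Fin k → Fin d → S) (a b : Fin k)
    (w : Fin k → S → ℝ)
    (hw : ∀ x, ∑ c, w c (Φ c x) = L a x - L b x) :
    ∃ w' : Fin k → S → ℝ,
      (∀ x, ∑ c, w' c (Φ c x) = L a x - L b x) ∧
      (∀ (c : Fin k) (σ : S),
        |w' c σ| ≤ Real.sqrt d * (k : ℝ) ^ ((d : ℝ) / 2)) := by
  classical
  set v : Fin d → ℝ := fun x => L a x - L b x with hvdef
  have hv1 : ∀ x, |v x| ≤ 1 := by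
    intro x
    have h1 := hL a x
    have h2 := hL b x
    rw [Set.mem_Icc] at h1 h2
    rw [abs_le]
    constructor <;> simp only [hvdef] <;> linarith
  set cols : (Fin k × S) → (Fin d → ℝ) :=
    fun n x => if Φ n.1 x = n.2 then 1 else 0 with hcolsdef
  have hvmem : v ∈ Submodule.span ℝ (Set.range cols) := by
    have hvsum : v = ∑ n : Fin k × S, w n.1 n.2 • cols n := by
      funext x
      rw [Finset.sum_apply]
      have h3 : ∀ n : Fin k × S, (w n.1 n.2 • cols n) x
          = if Φ n.1 x = n.2 then w n.1 n.2 else 0 := by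
        intro n
        rw [Pi.smul_apply, smul_eq_mul, hcolsdef]
        by_cases h : Φ n.1 x = n.2 <;> simp [h]
      rw [Finset.sum_congr rfl fun n _ => h3 n, Fintype.sum_prod_type]
      have h4 : ∀ c : Fin k, ∑ σ : S, (if Φ c x = σ then w c σ else 0) = w c (Φ c x) := by
        intro c
        rw [Finset.sum_ite_eq]
        simp
      rw [Finset.sum_congr rfl fun c _ => h4 c, hw x]
    rw [hvsum]
    exact Submodule.sum_mem _ fun n _ =>
      Submodule.smul_mem _ _ (Submodule.subset_span ⟨n, rfl⟩)
  obtain ⟨bset, hbsub, hbspan, hbind⟩ := exists_linearIndependent ℝ (Set.range cols)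
  have hbfin : bset.Finite := (Set.finite_range cols).subset hbsub
  haveI : Fintype bset := hbfin.fintype
  have hvmem2 : v ∈ Submodule.span ℝ (Set.range ((↑) : bset → (Fin d → ℝ))) := by
    rw [Subtype.range_coe, hbspan]
    exact hvmem
  rw [Submodule.mem_span_range_iff_exists_fun] at hvmem2
  obtain ⟨rc, hrc⟩ := hvmem2
  have hpre : ∀ u : bset, ∃ n : Fin k × S, cols n = (u : Fin d → ℝ) := fun u => hbsub u.2
  choose f hf using hpre
  have hfinj : Function.Injective f := by
    intro u u' h
    apply Subtype.ext
    rw [← hf u, ← hf u', h]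
  set g : bset → Fin d → ℝ := fun u => (u : Fin d → ℝ) with hgdef
  have hgite : ∀ (u : bset) x, g u x = if Φ (f u).1 x = (f u).2 then (1:ℝ) else 0 := by
    intro u x
    have h := congrFun (hf u) x
    simp only [hcolsdef] at h
    exact h.symm
  have h01 : ∀ (u : bset) x, g u x = 0 ∨ g u x = 1 := by
    intro u x
    rw [hgite]
    by_cases h : Φ (f u).1 x = (f u).2 <;> simp [h]
  have hrowcnt : ∀ x, ∑ u : bset, g u x ≤ (k:ℝ) := by
    intro x
    rw [Finset.sum_congr rfl fun u _ => hgite u x, Finset.sum_boole]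
    have hcardle : (Finset.univ.filter
        (fun u : bset => Φ (f u).1 x = (f u).2)).card ≤ Fintype.card (Fin k) := by
      rw [← Finset.card_univ]
      apply Finset.card_le_card_of_injOn (fun u => (f u).1) (fun u _ => Finset.mem_univ _)
      intro u hu u' hu' h
      have h' : (f u).1 = (f u').1 := h
      simp only [Finset.coe_filter, Set.mem_setOf_eq, Finset.mem_univ, true_and] at hu hu'
      apply hfinj
      have h2 : (f u).2 = (f u').2 := by rw [← hu, ← hu', h']
      exact Prod.ext h' h2
    rw [Fintype.card_fin] at hcardle
    exact_mod_cast hcardle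
  have hcard : Fintype.card bset ≤ d := by
    have h5 := hbind.fintype_card_le_finrank
    rwa [Module.finrank_pi, Fintype.card_fin] at h5
  have hinjc : ∀ rr : bset → ℝ, (∀ x, ∑ u, g u x * rr u = 0) → rr = 0 := by
    intro rr h0
    have h6 : ∑ u, rr u • g u = 0 := by
      funext x
      rw [Finset.sum_apply]
      have : ∀ u : bset, (rr u • g u) x = g u x * rr u := fun u => by
        rw [Pi.smul_apply, smul_eq_mul, mul_comm]
      rw [Finset.sum_congr rfl fun u _ => this u]
      exact h0 x
    have h7 := Fintype.linearIndependent_iff.mp hbind rr h6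
    funext u
    exact h7 u
  have hrcore : ∀ x, ∑ u, g u x * rc u = v x := by
    intro x
    have := congrFun hrc x
    rw [Finset.sum_apply] at this
    rw [← this]
    exact Finset.sum_congr rfl fun u _ => by
      rw [Pi.smul_apply, smul_eq_mul, mul_comm]
  have hb : ∀ u : bset, |rc u| ≤ Real.sqrt d * (k : ℝ) ^ ((d : ℝ) / 2) :=
    fun u => stmt13_core hk g h01 hrowcnt hcard hinjc v hv1 rc hrcore u
  refine ⟨fun cc σ => ∑ u : bset, if f u = (cc, σ) then rc u else 0, ?_, ?_⟩
  · intro x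
    rw [Finset.sum_comm]
    have hterm : ∀ u : bset, ∑ cc : Fin k, (if f u = (cc, Φ cc x) then rc u else 0)
        = g u x * rc u := by
      intro u
      have h1 : ∀ cc : Fin k, (if f u = (cc, Φ cc x) then rc u else 0)
          = if cc = (f u).1 then (if Φ (f u).1 x = (f u).2 then rc u else 0) else 0 := by
        intro cc
        by_cases hcc : cc = (f u).1
        · rw [if_pos hcc]
          by_cases h2 : Φ (f u).1 x = (f u).2
          · rw [if_pos h2, if_pos]
            exact Prod.ext hcc.symm (by rw [hcc]; exact h2.symm)
          · rw [if_neg h2, if_neg]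
            intro h3
            exact h2 (by rw [h3])
        · rw [if_neg hcc, if_neg]
          intro h3
          exact hcc (by rw [h3])
      rw [Finset.sum_congr rfl fun cc _ => h1 cc, Finset.sum_ite_eq' Finset.univ (f u).1]
      rw [if_pos (Finset.mem_univ _), hgite u x]
      by_cases h2 : Φ (f u).1 x = (f u).2 <;> simp [h2]
    rw [Finset.sum_congr rfl fun u _ => hterm u]
    exact hrcore x
  · intro cc σ
    show |∑ u : bset, if f u = (cc, σ) then rc u else 0|
      ≤ Real.sqrt d * (k : ℝ) ^ ((d : ℝ) / 2)
    by_cases h : ∃ u : bset, f u = (cc, σ)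
    · obtain ⟨u0, hu0⟩ := h
      have hs : (∑ u : bset, if f u = (cc, σ) then rc u else 0) = rc u0 := by
        rw [Finset.sum_eq_single u0]
        · rw [if_pos hu0]
        · intro u _ hne
          exact if_neg (fun h' => hne (hfinj (h'.trans hu0.symm)))
        · intro h'
          exact absurd (Finset.mem_univ u0) h'
      rw [hs]
      exact hb u0
    · have hs : (∑ u : bset, if f u = (cc, σ) then rc u else 0) = 0 :=
        Finset.sum_eq_zero fun u _ => if_neg (fun h' => h ⟨u, h'⟩)
      rw [hs, abs_zero]
      positivity
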